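/- (Erdős, Theorem A, quantitative form) For every ε > 0 there exist arbitrarily large positive integers x and y ≥ x such that gcd(x+i, y+j) > 1 for all pairs of integers i, j with 0 ≤ i, j ≤ (1−ε)(log x / log log x)^{1/2}. -/

import Mathlib

open Filter Real

lemma cheb (n : ℕ) (hn : 1 ≤ n) :
    4 ^ n ≤ (2 * n) ^ (Nat.count Nat.Prime (2 * n + 1) + 1) := by
  have h2n : 0 < 2 * n := by omega
  have heq : (∏ p ∈ (2 * n + 1).primesBelow, p ^ (Nat.centralBinom n).factorization p)
      = Nat.centralBinom n := by
    conv_rhs => rw [← Nat.prod_pow_factorization_centralBinom n]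
    apply Finset.prod_subset
    · intro p hp
      simp only [Nat.primesBelow, Finset.mem_filter, Finset.mem_range] at hp ⊢
      omega
    intro p hp hps
    have hnp : ¬ p.Prime := by
      simp only [Nat.primesBelow, Finset.mem_filter] at hps; tauto
    rw [Nat.factorization_eq_zero_of_not_prime _ hnp, pow_zero]
  have hle : Nat.centralBinom n ≤ (2 * n) ^ (Nat.count Nat.Prime (2 * n + 1)) := by
    rw [← heq]
    have hcard : (2 * n + 1).primesBelow.card = Nat.count Nat.Prime (2 * n + 1) :=
      Nat.primesBelow_card_eq_primeCounting' _
    rw [← hcard]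
    apply Finset.prod_le_pow_card
    intro p _
    exact Nat.pow_factorization_choose_le h2n
  calc 4 ^ n ≤ 2 * n * Nat.centralBinom n :=
        Nat.four_pow_le_two_mul_self_mul_centralBinom n hn
    _ ≤ 2 * n * (2 * n) ^ (Nat.count Nat.Prime (2 * n + 1)) :=
        Nat.mul_le_mul_left _ hle
    _ = (2 * n) ^ (Nat.count Nat.Prime (2 * n + 1) + 1) := by ring

lemma cheb_real (n : ℕ) (hn : 1 ≤ n) :
    (n : ℝ) * Real.log 4
      ≤ ((Nat.count Nat.Prime (2 * n + 1) + 1 : ℕ) : ℝ) * Real.log (2 * (n : ℝ)) := by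
  have h := cheb n hn
  have hcast : ((4:ℝ)) ^ n ≤ (2 * (n:ℝ)) ^ (Nat.count Nat.Prime (2 * n + 1) + 1) := by
    exact_mod_cast h
  have h4 : (0:ℝ) < 4 ^ n := by positivity
  have := Real.log_le_log h4 hcast
  rw [Real.log_pow, Real.log_pow] at this
  exact_mod_cast this

lemma growth (a b C D : ℝ) (hab : a < b) :
    ∀ᶠ t : ℝ in atTop, C * (t ^ a * (Real.log t + D)) ≤ t ^ b := by
  set γ := (b - a) / 2 with hγdef
  have hγ : 0 < γ := by rw [hγdef]; linarith
  have hmono : Tendsto (fun t : ℝ => t ^ γ) atTop atTop := tendsto_rpow_atTop hγ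
  have hD : ∀ᶠ t : ℝ in atTop, D ≤ γ⁻¹ * t ^ γ := by
    have : Tendsto (fun t : ℝ => γ⁻¹ * t ^ γ) atTop atTop :=
      hmono.const_mul_atTop (by positivity)
    exact this.eventually_ge_atTop D
  have hC : ∀ᶠ t : ℝ in atTop, C * (2 * γ⁻¹) ≤ t ^ γ := hmono.eventually_ge_atTop _
  have hlogD : ∀ᶠ t : ℝ in atTop, -D ≤ Real.log t :=
    Real.tendsto_log_atTop.eventually_ge_atTop _
  filter_upwards [hD, hC, hlogD, eventually_ge_atTop 1] with t h2 h3 hld ht1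
  have ht0 : (0:ℝ) < t := lt_of_lt_of_le one_pos ht1
  have hta : (0:ℝ) < t ^ a := rpow_pos_of_pos ht0 a
  have htγ : (0:ℝ) < t ^ γ := rpow_pos_of_pos ht0 γ
  have h1 : Real.log t ≤ γ⁻¹ * t ^ γ := by
    have hlt : γ * Real.log t ≤ t ^ γ - 1 := by
      have := Real.log_le_sub_one_of_pos (rpow_pos_of_pos ht0 γ)
      rwa [Real.log_rpow ht0] at this
    have h' : γ * Real.log t ≤ t ^ γ := by linarith
    calc Real.log t = γ⁻¹ * (γ * Real.log t) := by field_simp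
      _ ≤ γ⁻¹ * t ^ γ := by
          apply mul_le_mul_of_nonneg_left h' (by positivity)
  have hbsplit : t ^ b = t ^ a * t ^ γ * t ^ γ := by
    rw [← Real.rpow_add ht0, ← Real.rpow_add ht0]
    congr 1
    rw [hγdef]; ring
  rcases le_or_gt C 0 with hC0 | hC0
  · have hLD : 0 ≤ Real.log t + D := by linarith
    have : C * (t ^ a * (Real.log t + D)) ≤ 0 := by
      apply mul_nonpos_of_nonpos_of_nonneg hC0
      positivity
    linarith [rpow_pos_of_pos ht0 b]
  · have step1 : Real.log t + D ≤ 2 * γ⁻¹ * t ^ γ := by linarith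
    calc C * (t ^ a * (Real.log t + D)) ≤ C * (t ^ a * (2 * γ⁻¹ * t ^ γ)) := by
          apply mul_le_mul_of_nonneg_left _ hC0.le
          exact mul_le_mul_of_nonneg_left step1 hta.le
      _ = (C * (2 * γ⁻¹)) * (t ^ a * t ^ γ) := by ring
      _ ≤ t ^ γ * (t ^ a * t ^ γ) := by
          apply mul_le_mul_of_nonneg_right h3
          positivity
      _ = t ^ b := by rw [hbsplit]; ring

lemma nth_prime_le' (α : ℝ) (hα : 1 < α) :
    ∀ᶠ M : ℕ in atTop, (Nat.nth Nat.Prime (M - 1) : ℝ) ≤ (M : ℝ) ^ α := by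
  set β := (1 + α) / 2 with hβdef
  have hβ1 : 1 < β := by rw [hβdef]; linarith
  have hβα : β < α := by rw [hβdef]; linarith
  have hlog2 : (0:ℝ) < Real.log 2 := Real.log_pos (by norm_num)
  have hcast : Tendsto (fun M : ℕ => (M : ℝ)) atTop atTop := tendsto_natCast_atTop_atTop
  have hG1 : ∀ᶠ t : ℝ in atTop,
      (β / Real.log 2) * (t ^ (1:ℝ) * (Real.log t + Real.log 4 / β)) ≤ t ^ β :=
    growth 1 β _ _ hβ1
  have hG2 : ∀ᶠ t : ℝ in atTop, 5 * (t ^ β * (Real.log t + 0)) ≤ t ^ α := growth β α 5 0 hβα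
  have hG3 : ∀ᶠ t : ℝ in atTop, 1 ≤ Real.log t := Real.tendsto_log_atTop.eventually_ge_atTop 1
  filter_upwards [hcast.eventually hG1, hcast.eventually hG2, hcast.eventually hG3,
    eventually_ge_atTop 2] with M hg1 hg2 hg3 hM2
  have hM1 : (1:ℝ) ≤ (M:ℝ) := by exact_mod_cast Nat.one_le_of_lt hM2
  have hM0 : (0:ℝ) < (M:ℝ) := by linarith
  have hMb1 : (1:ℝ) ≤ (M:ℝ) ^ β := Real.one_le_rpow hM1 (by linarith)
  set n := ⌈(M:ℝ) ^ β⌉₊ with hndef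
  have hn1 : 1 ≤ n := by
    rw [hndef, Nat.one_le_ceil_iff]
    positivity
  have hnlow : (M:ℝ) ^ β ≤ (n:ℝ) := Nat.le_ceil _
  have hnup : (n:ℝ) ≤ 2 * (M:ℝ) ^ β := by
    have := Nat.ceil_lt_add_one (by positivity : (0:ℝ) ≤ (M:ℝ) ^ β)
    have h2 : ((⌈(M:ℝ) ^ β⌉₊ : ℕ) : ℝ) < (M:ℝ) ^ β + 1 := this
    rw [hndef]
    push_cast
    linarith
  have hn0 : (0:ℝ) < (n:ℝ) := by exact_mod_cast hn1
  have hlog2n : (0:ℝ) < Real.log (2 * (n:ℝ)) := Real.log_pos (by linarith)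
  have hlogM : (0:ℝ) < Real.log M := lt_of_lt_of_le one_pos hg3
  have h2na : Real.log (2 * (n:ℝ)) ≤ β * Real.log M + Real.log 4 := by
    have hle : (2:ℝ) * (n:ℝ) ≤ 4 * (M:ℝ) ^ β := by linarith
    calc Real.log (2 * (n:ℝ)) ≤ Real.log (4 * (M:ℝ) ^ β) :=
          Real.log_le_log (by linarith) hle
      _ = Real.log 4 + β * Real.log M := by
          rw [Real.log_mul (by norm_num) (by positivity), Real.log_rpow hM0]
      _ = β * Real.log M + Real.log 4 := by ring
  have hlog4 : Real.log (4:ℝ) = 2 * Real.log 2 := by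
    rw [show (4:ℝ) = 2 ^ 2 by norm_num, Real.log_pow]
    push_cast; ring
  have hmain : ((M:ℝ) + 1) * Real.log (2 * (n:ℝ)) ≤ (n:ℝ) * Real.log 4 := by
    have hstep : ((M:ℝ) + 1) * Real.log (2 * (n:ℝ))
        ≤ (2 * (M:ℝ)) * (β * Real.log M + Real.log 4) := by
      apply mul_le_mul (by linarith) h2na hlog2n.le (by linarith)
    have hid : (2 * (M:ℝ)) * (β * Real.log M + Real.log 4)
        = (2 * Real.log 2) * ((β / Real.log 2) * ((M:ℝ) ^ (1:ℝ) * (Real.log M + Real.log 4 / β))) := by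
      rw [Real.rpow_one]
      field_simp
    calc ((M:ℝ) + 1) * Real.log (2 * (n:ℝ))
        ≤ (2 * Real.log 2) * ((β / Real.log 2) * ((M:ℝ) ^ (1:ℝ) * (Real.log M + Real.log 4 / β))) := by
          rw [← hid]; exact hstep
      _ ≤ (2 * Real.log 2) * (M:ℝ) ^ β := by
          apply mul_le_mul_of_nonneg_left hg1 (by positivity)
      _ ≤ (2 * Real.log 2) * (n:ℝ) := by
          apply mul_le_mul_of_nonneg_left hnlow (by positivity)
      _ = (n:ℝ) * Real.log 4 := by rw [hlog4]; ring
  have hcheb := cheb_real n hn1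
  have hMcount : (M:ℝ) + 1 ≤ ((Nat.count Nat.Prime (2 * n + 1) + 1 : ℕ) : ℝ) := by
    apply le_of_mul_le_mul_right _ hlog2n
    exact hmain.trans hcheb
  have hcount : M ≤ Nat.count Nat.Prime (2 * n + 1) := by
    have : (M:ℝ) ≤ ((Nat.count Nat.Prime (2 * n + 1) : ℕ) : ℝ) := by push_cast at hMcount ⊢; linarith
    exact_mod_cast this
  have hnth : Nat.nth Nat.Prime (M - 1) < 2 * n + 1 := by
    rw [← Nat.lt_nth_iff_count_lt Nat.infinite_setOf_prime]
    exact lt_of_lt_of_le (by omega) hcount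
  have hnthle : (Nat.nth Nat.Prime (M - 1) : ℝ) ≤ 2 * (n:ℝ) := by
    have : Nat.nth Nat.Prime (M - 1) ≤ 2 * n := by omega
    exact_mod_cast this
  calc (Nat.nth Nat.Prime (M - 1) : ℝ) ≤ 2 * (n:ℝ) := hnthle
    _ ≤ 4 * (M:ℝ) ^ β := by linarith
    _ ≤ 5 * ((M:ℝ) ^ β * (Real.log M + 0)) := by
        rw [add_zero]
        nlinarith [Real.rpow_pos_of_pos hM0 β]
    _ ≤ (M:ℝ) ^ α := hg2

lemma idx_inj {K i j i' j' : ℕ} (hj : j < K + 1) (hj' : j' < K + 1)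
    (h : i * (K + 1) + j = i' * (K + 1) + j') : i = i' ∧ j = j' := by
  have h1 : (i * (K + 1) + j) % (K + 1) = j := by
    rw [Nat.add_comm, Nat.add_mul_mod_self_right, Nat.mod_eq_of_lt hj]
  have h2 : (i' * (K + 1) + j') % (K + 1) = j' := by
    rw [Nat.add_comm, Nat.add_mul_mod_self_right, Nat.mod_eq_of_lt hj']
  have hjj : j = j' := by rw [← h1, ← h2, h]
  subst hjj
  have : i * (K + 1) = i' * (K + 1) := by omega
  exact ⟨Nat.eq_of_mul_eq_mul_right (by omega) this, rfl⟩

set_option maxHeartbeats 1000000 in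
lemma erdos_aux (ε : ℝ) (hε : 0 < ε) (hε1 : ε < 1) (N : ℕ) :
    ∃ x y : ℕ, N ≤ x ∧ 0 < x ∧ x ≤ y ∧
      ∀ i j : ℕ,
        (i : ℝ) ≤ (1 - ε) * Real.sqrt (Real.log x / Real.log (Real.log x)) →
        (j : ℝ) ≤ (1 - ε) * Real.sqrt (Real.log x / Real.log (Real.log x)) →
        1 < Nat.gcd (x + i) (y + j) := by
  set c : ℝ := 1 - ε with hcdef
  have hc0 : 0 < c := by rw [hcdef]; linarith
  have hc1 : c < 1 := by rw [hcdef]; linarith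
  have hc2 : 0 < c ^ 2 := by positivity
  have hc2lt : c ^ 2 < 1 := by nlinarith
  have hc2inv : 1 < (c ^ 2)⁻¹ := (one_lt_inv₀ hc2).mpr hc2lt
  set α : ℝ := (1 + (c ^ 2)⁻¹) / 2 with hαdef
  have hα1 : 1 < α := by rw [hαdef]; linarith
  have hcα : c ^ 2 * α < 1 := by
    rw [hαdef]
    have : c ^ 2 * ((1 + (c ^ 2)⁻¹) / 2) = (c ^ 2 + 1) / 2 := by
      field_simp
    rw [this]; nlinarith
  set δ : ℝ := 1 - c ^ 2 * α with hδdef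
  have hδ0 : 0 < δ := by rw [hδdef]; linarith
  have hlog2 : (0:ℝ) < Real.log 2 := Real.log_pos (by norm_num)
  set A : ℝ := -Real.log (Real.log 2) with hAdef
  set B : ℝ := c ^ 2 * Real.log ((N:ℝ) + 2) with hBdef
  have hBpos : 0 ≤ B := by
    rw [hBdef]
    have : (0:ℝ) ≤ Real.log ((N:ℝ) + 2) := Real.log_nonneg (by push_cast; linarith [Nat.cast_nonneg (α := ℝ) N])
    positivity
  -- eventual conditions in M
  have hcast : Tendsto (fun M : ℕ => (M : ℝ)) atTop atTop := tendsto_natCast_atTop_atTop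
  have hE1 := nth_prime_le' α hα1
  have hE3 : ∀ᶠ M : ℕ in atTop, (3:ℝ) ≤ (M:ℝ) * Real.log 2 := by
    have : Tendsto (fun M : ℕ => (M:ℝ) * Real.log 2) atTop atTop :=
      hcast.atTop_mul_const hlog2
    exact this.eventually_ge_atTop 3
  have hE4 : ∀ᶠ M : ℕ in atTop, (A + B + 1) / δ ≤ Real.log M :=
    hcast.eventually (Real.tendsto_log_atTop.eventually_ge_atTop _)
  have hT : Tendsto (fun K : ℕ => (K + 1) * (K + 1)) atTop atTop := by
    apply tendsto_atTop_mono (fun K => ?_) tendsto_id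
    simp only [id]
    nlinarith
  obtain ⟨K, h1, h2, h3, h4⟩ :=
    ((hT.eventually hE1).and ((hT.eventually (eventually_ge_atTop 2)).and
      ((hT.eventually hE3).and (hT.eventually hE4)))).exists
  set M : ℕ := (K + 1) * (K + 1) with hMdef
  -- the primes and the CRT setup
  set s : ℕ × ℕ → ℕ := fun q => Nat.nth Nat.Prime (q.1 * (K + 1) + q.2) with hsdef
  set l : List (ℕ × ℕ) := (List.range (K + 1)) ×ˢ (List.range (K + 1)) with hldef
  have hmem : ∀ q : ℕ × ℕ, q ∈ l ↔ q.1 ≤ K ∧ q.2 ≤ K := by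
    rintro ⟨i, j⟩
    rw [hldef, List.mem_product]
    simp only [List.mem_range]
    omega
  have hlen : l.length = M := by
    rw [hldef, List.length_product]
    simp [hMdef]
  have hprime : ∀ q : ℕ × ℕ, (s q).Prime := fun q => Nat.prime_nth_prime _
  have hsinj : ∀ q q' : ℕ × ℕ, q ∈ l → q' ∈ l → s q = s q' → q = q' := by
    intro q q' hq hq' hss
    have hidx : q.1 * (K + 1) + q.2 = q'.1 * (K + 1) + q'.2 :=
      Nat.nth_injective Nat.infinite_setOf_prime hss
    have hb1 := (hmem q).1 hq
    have hb2 := (hmem q').1 hq'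
    obtain ⟨hi, hj⟩ := idx_inj (by omega) (by omega) hidx
    exact Prod.ext hi hj
  have hnd : l.Nodup := List.nodup_range.product List.nodup_range
  have co : l.Pairwise (Function.onFun Nat.Coprime s) := by
    apply List.Pairwise.imp_of_mem _ hnd
    intro a b ha hb hne
    exact (Nat.coprime_primes (hprime a) (hprime b)).mpr
      (fun hEq => hne (hsinj a b ha hb hEq))
  have hsne : ∀ q ∈ l, s q ≠ 0 := fun q _ => (hprime q).pos.ne'
  set a1 : ℕ × ℕ → ℕ := fun q => s q - q.1 % s q with ha1def
  set a2 : ℕ × ℕ → ℕ := fun q => s q - q.2 % s q with ha2def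
  set P : ℕ := (l.map s).prod with hPdef
  set r1 : ℕ := (Nat.chineseRemainderOfList a1 s l co : ℕ) with hr1def
  set r2 : ℕ := (Nat.chineseRemainderOfList a2 s l co : ℕ) with hr2def
  have hr1 : ∀ q ∈ l, r1 ≡ a1 q [MOD s q] := (Nat.chineseRemainderOfList a1 s l co).prop
  have hr2 : ∀ q ∈ l, r2 ≡ a2 q [MOD s q] := (Nat.chineseRemainderOfList a2 s l co).prop
  have hr1lt : r1 < P := Nat.chineseRemainderOfList_lt_prod a1 s l co hsne
  set x : ℕ := r1 + P * (N + 1) with hxdef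
  set y : ℕ := r2 + P * (N + 1 + x) with hydef
  have hPdvd : ∀ q ∈ l, s q ∣ P := fun q hq => List.dvd_prod (List.mem_map_of_mem (f := s) hq)
  have hdvd_gen : ∀ (r : ℕ) (t : ℕ) (b : ℕ × ℕ → ℕ) (m : ℕ × ℕ → ℕ),
      (∀ q ∈ l, r ≡ b q [MOD s q]) → (∀ q, b q = s q - m q % s q) →
      ∀ q ∈ l, s q ∣ (r + P * t) + m q := by
    intro r t b m hr hb q hq
    have hmodP : r + P * t ≡ r + 0 [MOD s q] :=
      Nat.ModEq.add_left r ((Nat.modEq_zero_iff_dvd).2 ((hPdvd q hq).mul_right t))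
    have hmodx : r + P * t ≡ b q [MOD s q] := by
      refine hmodP.trans ?_
      simpa using hr q hq
    have hdvd_b : s q ∣ b q + m q := by
      refine ⟨1 + m q / s q, ?_⟩
      have hdm := Nat.div_add_mod (m q) (s q)
      have hmlt : m q % s q < s q := Nat.mod_lt _ (hprime q).pos
      rw [hb q, Nat.mul_add, Nat.mul_one]
      omega
    exact (Nat.modEq_zero_iff_dvd).1 ((hmodx.add_right (m q)).trans
      ((Nat.modEq_zero_iff_dvd).2 hdvd_b))
  have hdvdx : ∀ q ∈ l, s q ∣ x + q.1 :=
    hdvd_gen r1 (N + 1) a1 (fun q => q.1) hr1 (fun q => rfl)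
  have hdvdy : ∀ q ∈ l, s q ∣ y + q.2 :=
    hdvd_gen r2 (N + 1 + x) a2 (fun q => q.2) hr2 (fun q => rfl)
  set pm : ℕ := Nat.nth Nat.Prime (M - 1) with hpmdef
  have hsle : ∀ q ∈ l, s q ≤ pm := by
    intro q hq
    have hb := (hmem q).1 hq
    apply Nat.nth_monotone Nat.infinite_setOf_prime
    rw [hMdef]
    have hle : q.1 * (K + 1) + q.2 ≤ K * (K + 1) + K :=
      add_le_add (Nat.mul_le_mul_right _ hb.1) hb.2
    have hid : (K + 1) * (K + 1) = K * (K + 1) + K + 1 := by ring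
    omega
  have hlm : (l.map s).length = M := by rw [List.length_map]; exact hlen
  have hP_up : P ≤ pm ^ M := by
    rw [hPdef, ← hlm]
    apply List.prod_le_pow_card
    intro u hu
    obtain ⟨q, hq, rfl⟩ := List.mem_map.1 hu
    exact hsle q hq
  have hP_low : 2 ^ M ≤ P := by
    rw [hPdef, ← hlm]
    apply List.pow_card_le_prod
    intro u hu
    obtain ⟨q, hq, rfl⟩ := List.mem_map.1 hu
    exact (hprime q).two_le
  have hP1 : 1 ≤ P := le_trans Nat.one_le_two_pow hP_low
  have hxN : N ≤ x := by
    have : N + 1 ≤ P * (N + 1) := Nat.le_mul_of_pos_left _ hP1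
    omega
  have hx0 : 0 < x := by
    have : 0 < P * (N + 1) := Nat.mul_pos (by omega) (by omega)
    omega
  have hxy : x ≤ y := by
    have : x ≤ P * (N + 1 + x) := by
      calc x ≤ N + 1 + x := by omega
        _ ≤ P * (N + 1 + x) := Nat.le_mul_of_pos_left _ hP1
    omega
  have hx_up : x ≤ pm ^ M * (N + 2) := by
    calc x = r1 + P * (N + 1) := rfl
      _ ≤ P + P * (N + 1) := by omega
      _ = P * (N + 2) := by ring
      _ ≤ pm ^ M * (N + 2) := Nat.mul_le_mul_right _ hP_up
  have hx_low : 2 ^ M ≤ x := by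
    have : P ≤ P * (N + 1) := Nat.le_mul_of_pos_right _ (by omega)
    omega
  clear_value r1 r2
  clear_value x y P pm s l M
  refine ⟨x, y, hxN, hx0, hxy, ?_⟩
  have hM1R : (1:ℝ) ≤ (M:ℝ) := by exact_mod_cast Nat.one_le_of_lt h2
  have hM0R : (0:ℝ) < (M:ℝ) := by linarith
  have hpm2 : 2 ≤ pm := by rw [hpmdef]; exact (Nat.prime_nth_prime _).two_le
  have hpm0R : (0:ℝ) < (pm:ℝ) := by exact_mod_cast Nat.lt_of_lt_of_le Nat.zero_lt_two hpm2
  have hlogpm : Real.log pm ≤ α * Real.log M := by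
    calc Real.log pm ≤ Real.log ((M:ℝ) ^ α) := Real.log_le_log hpm0R h1
      _ = α * Real.log M := Real.log_rpow hM0R α
  have hx0R : (0:ℝ) < (x:ℝ) := by exact_mod_cast hx0
  have hLx_up : Real.log x ≤ (M:ℝ) * Real.log pm + Real.log ((N:ℝ) + 2) := by
    have hc : (x:ℝ) ≤ (pm:ℝ) ^ (M:ℕ) * ((N:ℝ) + 2) := by
      have h := hx_up
      have : ((x:ℕ):ℝ) ≤ ((pm ^ M * (N + 2) : ℕ) : ℝ) := by exact_mod_cast h
      push_cast at this
      convert this using 2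
    calc Real.log x ≤ Real.log ((pm:ℝ) ^ (M:ℕ) * ((N:ℝ) + 2)) :=
          Real.log_le_log hx0R hc
      _ = (M:ℝ) * Real.log pm + Real.log ((N:ℝ) + 2) := by
          rw [Real.log_mul (by positivity) (by positivity), Real.log_pow]
  have hLx_low : (M:ℝ) * Real.log 2 ≤ Real.log x := by
    have hc : ((2:ℝ)) ^ (M:ℕ) ≤ (x:ℝ) := by exact_mod_cast hx_low
    have h := Real.log_le_log (by positivity) hc
    rwa [Real.log_pow] at h
  have hLx3 : (3:ℝ) ≤ Real.log x := le_trans h3 hLx_low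
  have hLL3 : Real.log 3 ≤ Real.log (Real.log x) :=
    Real.log_le_log (by norm_num) hLx3
  have hLL0 : (0:ℝ) < Real.log (Real.log x) :=
    lt_of_lt_of_le (Real.log_pos (by norm_num)) hLL3
  have hLL_low : Real.log (M:ℝ) + Real.log (Real.log 2) ≤ Real.log (Real.log x) := by
    have h := Real.log_le_log (by positivity) hLx_low
    rwa [Real.log_mul (by positivity) (by positivity)] at h
  have hAB : A + B + 1 ≤ δ * Real.log M := by
    have := (div_le_iff₀ hδ0).1 h4
    linarith
  have hkey : c ^ 2 * Real.log x < (M:ℝ) * Real.log (Real.log x) := by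
    have hup2 : Real.log x ≤ (M:ℝ) * (α * Real.log M) + Real.log ((N:ℝ) + 2) := by
      refine hLx_up.trans ?_
      have := mul_le_mul_of_nonneg_left hlogpm hM0R.le
      linarith
    have step : c ^ 2 * Real.log x ≤ (1 - δ) * ((M:ℝ) * Real.log M) + B := by
      have hm := mul_le_mul_of_nonneg_left hup2 hc2.le
      have hid : c ^ 2 * ((M:ℝ) * (α * Real.log M) + Real.log ((N:ℝ) + 2))
          = (1 - δ) * ((M:ℝ) * Real.log M) + B := by
        rw [hBdef, hδdef]; ring
      linarith
    have hf : (M:ℝ) * (A + B + 1) ≤ (M:ℝ) * (δ * Real.log M) :=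
      mul_le_mul_of_nonneg_left hAB (by linarith)
    have step2 : (1 - δ) * ((M:ℝ) * Real.log M) + B < (M:ℝ) * (Real.log M - A) := by
      have e1 : (M:ℝ) * (A + B + 1) = (M:ℝ) * A + (M:ℝ) * B + M := by ring
      have e2 : (M:ℝ) * (δ * Real.log M) = δ * ((M:ℝ) * Real.log M) := by ring
      have e3 : B ≤ (M:ℝ) * B := le_mul_of_one_le_left hBpos hM1R
      have e4 : (M:ℝ) * (Real.log M - A) = (M:ℝ) * Real.log M - (M:ℝ) * A := by ring
      nlinarith [hf, e1, e2, e3, e4, hM1R]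
    have step3 : (M:ℝ) * (Real.log M - A) ≤ (M:ℝ) * Real.log (Real.log x) := by
      apply mul_le_mul_of_nonneg_left _ (by linarith)
      rw [hAdef]
      linarith
    linarith
  have hbound : c * Real.sqrt (Real.log x / Real.log (Real.log x)) < (K:ℝ) + 1 := by
    have hMKR : ((M:ℕ):ℝ) = ((K:ℝ) + 1) ^ 2 := by rw [hMdef]; push_cast; ring
    have hdiv : Real.log x / Real.log (Real.log x) < (((K:ℝ) + 1) / c) ^ 2 := by
      rw [div_lt_iff₀ hLL0]
      have hsqid : (((K:ℝ) + 1) / c) ^ 2 = (M:ℝ) / c ^ 2 := by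
        rw [hMKR]; field_simp
      rw [hsqid, div_mul_eq_mul_div, lt_div_iff₀ hc2]
      nlinarith [hkey]
    have hpos : (0:ℝ) < ((K:ℝ) + 1) / c := by positivity
    have hsq : Real.sqrt (Real.log x / Real.log (Real.log x)) < ((K:ℝ) + 1) / c := by
      rw [show (((K:ℝ) + 1) / c) = Real.sqrt ((((K:ℝ) + 1) / c) ^ 2) from
        (Real.sqrt_sq hpos.le).symm]
      apply Real.sqrt_lt_sqrt _ hdiv
      positivity
    calc c * Real.sqrt (Real.log x / Real.log (Real.log x))
        < c * (((K:ℝ) + 1) / c) := mul_lt_mul_of_pos_left hsq hc0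
      _ = (K:ℝ) + 1 := by field_simp
  intro i j hi hj
  have hiK : i ≤ K := by
    have hilt : (i:ℝ) < (K:ℝ) + 1 := lt_of_le_of_lt hi hbound
    have : i < K + 1 := by exact_mod_cast hilt
    omega
  have hjK : j ≤ K := by
    have hjlt : (j:ℝ) < (K:ℝ) + 1 := lt_of_le_of_lt hj hbound
    have : j < K + 1 := by exact_mod_cast hjlt
    omega
  have hql : ((i, j) : ℕ × ℕ) ∈ l := (hmem (i, j)).2 ⟨hiK, hjK⟩
  have hgcd : s (i, j) ∣ Nat.gcd (x + i) (y + j) :=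
    Nat.dvd_gcd (hdvdx (i, j) hql) (hdvdy (i, j) hql)
  have hgpos : 0 < Nat.gcd (x + i) (y + j) := Nat.gcd_pos_of_pos_left _ (by omega)
  exact lt_of_lt_of_le (hprime (i, j)).one_lt (Nat.le_of_dvd hgpos hgcd)


/-- Erdős, Theorem A: for every ε > 0 there exist arbitrarily large x and y ≥ x such that
    gcd(x+i, y+j) > 1 for all 0 ≤ i, j ≤ (1−ε)(log x / log log x)^{1/2}. -/
theorem erdos_theorem_A (ε : ℝ) (hε : 0 < ε) (N : ℕ) :
    ∃ x y : ℕ, N ≤ x ∧ 0 < x ∧ x ≤ y ∧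
      ∀ i j : ℕ,
        (i : ℝ) ≤ (1 - ε) * Real.sqrt (Real.log x / Real.log (Real.log x)) →
        (j : ℝ) ≤ (1 - ε) * Real.sqrt (Real.log x / Real.log (Real.log x)) →
        1 < Nat.gcd (x + i) (y + j) := by
  obtain ⟨x, y, hx, h0, hxy, h⟩ :=
    erdos_aux (min ε (1/2)) (lt_min hε (by norm_num))
      (lt_of_le_of_lt (min_le_right _ _) (by norm_num)) N
  refine ⟨x, y, hx, h0, hxy, ?_⟩
  intro i j hi hj
  have hmono : (1 - ε) * Real.sqrt (Real.log x / Real.log (Real.log x))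
      ≤ (1 - min ε (1/2)) * Real.sqrt (Real.log x / Real.log (Real.log x)) := by
    apply mul_le_mul_of_nonneg_right _ (Real.sqrt_nonneg _)
    have := min_le_left ε (1/2)
    linarith
  exact h i j (hi.trans hmono) (hj.trans hmono)
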